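/- (Sufficiency in the model with heterogeneous sender thresholds and common receiver effects.) Fix β ∈ ℝ^k, covariate vectors x₁₁, x₁₂, x₂₁, x₂₂ ∈ ℝ^k, receiver effects γ₁, γ₂ ∈ ℝ, sender-specific threshold functions λ₁, λ₂ : {1,…,M} → ℝ, and cutoffs m, m' ∈ {1,…,M}. Let D₁₁, D₁₂, D₂₁, D₂₂ be mutually independent random variables valued in {0,1} with P(D_{1s} = 1) = Λ(⟨x_{1s}, β⟩ + γ_s − λ₁(m)) and P(D_{2s} = 1) = Λ(⟨x_{2s}, β⟩ + γ_s − λ₂(m')) for s ∈ {1,2}. Set Z = ((D₁₁ − D₁₂) − (D₂₁ − D₂₂))/2 and r = (x₁₁ − x₁₂) − (x₂₁ − x₂₂). Then P(Z = 1 | Z ∈ {−1, +1}) = Λ(⟨r, β⟩); in particular this conditional probability does not depend on γ₁, γ₂, λ₁, λ₂. -/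

import Mathlib

open MeasureTheory ProbabilityTheory
open scoped RealInnerProductSpace

/-- The standard logistic CDF `Λ(z) = e^z / (1 + e^z)`. -/
noncomputable def logistic (z : ℝ) : ℝ := Real.exp z / (1 + Real.exp z)

lemma logistic_pos (z : ℝ) : 0 < logistic z := by
  unfold logistic; positivity

lemma one_sub_logistic (z : ℝ) : 1 - logistic z = logistic (-z) := by
  unfold logistic
  have h := Real.exp_pos z
  rw [Real.exp_neg]
  field_simp
  ring

lemma logistic_key (a b c d : ℝ) :
    logistic a * logistic (-b) * logistic (-c) * logistic d /
      (logistic a * logistic (-b) * logistic (-c) * logistic d +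
       logistic (-a) * logistic b * logistic c * logistic (-d))
    = logistic (a - b - c + d) := by
  unfold logistic
  have ea := Real.exp_pos a
  have eb := Real.exp_pos b
  have ec := Real.exp_pos c
  have ed := Real.exp_pos d
  have h : Real.exp (a - b - c + d) = Real.exp a / Real.exp b / Real.exp c * Real.exp d := by
    rw [← Real.exp_sub, ← Real.exp_sub, ← Real.exp_add]
  rw [Real.exp_neg a, Real.exp_neg b, Real.exp_neg c, Real.exp_neg d, h]
  have h1 : (0:ℝ) < 1 + Real.exp a := by linarith
  have h2 : (0:ℝ) < 1 + Real.exp b := by linarith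
  have h3 : (0:ℝ) < 1 + Real.exp c := by linarith
  have h4 : (0:ℝ) < 1 + Real.exp d := by linarith
  have h5 : (0:ℝ) < 1 + (Real.exp a)⁻¹ := by positivity
  have h6 : (0:ℝ) < 1 + (Real.exp b)⁻¹ := by positivity
  have h7 : (0:ℝ) < 1 + (Real.exp c)⁻¹ := by positivity
  have h8 : (0:ℝ) < 1 + (Real.exp d)⁻¹ := by positivity
  have h9 : (0:ℝ) < 1 + Real.exp a / Real.exp b / Real.exp c * Real.exp d := by positivity
  field_simp
  ring

/-- Sufficiency in the ordered-logit network model with heterogeneous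
sender-specific threshold functions `lam 0, lam 1` and common (category
invariant) receiver effects `γ`: the same cutoff `mc 0` is used for both dyads
of the first sender and the same cutoff `mc 1` for both dyads of the second
sender. -/
theorem sufficiency_sender_thresholds_common_receiver
    {Ω : Type*} [MeasurableSpace Ω] (P : Measure Ω) [IsProbabilityMeasure P]
    (k M : ℕ) (hM : 1 ≤ M)
    (β : EuclideanSpace ℝ (Fin k))
    (x : Fin 2 → Fin 2 → EuclideanSpace ℝ (Fin k))
    (γ : Fin 2 → ℝ)
    (lam : Fin 2 → Fin M → ℝ) (mc : Fin 2 → Fin M)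
    (D : Fin 2 → Fin 2 → Ω → ℝ)
    (hmeas : ∀ r s, Measurable (D r s))
    (hval : ∀ r s ω, D r s ω = 0 ∨ D r s ω = 1)
    (hindep : iIndepFun
      (fun p : Fin 2 × Fin 2 => D p.1 p.2) P)
    (hprob : ∀ r s, P {ω | D r s ω = 1}
      = ENNReal.ofReal (logistic (⟪x r s, β⟫ + γ s - lam r (mc r))))
    (Z : Ω → ℝ)
    (hZ : ∀ ω, Z ω = ((D 0 0 ω - D 0 1 ω) - (D 1 0 ω - D 1 1 ω)) / 2)
    (r : EuclideanSpace ℝ (Fin k))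
    (hr : r = (x 0 0 - x 0 1) - (x 1 0 - x 1 1)) :
    P[|{ω | Z ω = 1 ∨ Z ω = -1}] {ω | Z ω = 1}
      = ENNReal.ofReal (logistic ⟪r, β⟫) := by
  -- abbreviations for the four linear indices
  set a : Fin 2 → Fin 2 → ℝ := fun i s => ⟪x i s, β⟫ + γ s - lam i (mc i) with ha
  -- probability of the zero event
  have hone : ∀ i s, P ((D i s) ⁻¹' {1}) = ENNReal.ofReal (logistic (a i s)) := by
    intro i s
    have : (D i s) ⁻¹' {1} = {ω | D i s ω = 1} := rfl
    rw [this, hprob i s]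
  have hzero : ∀ i s, P ((D i s) ⁻¹' {0}) = ENNReal.ofReal (logistic (-(a i s))) := by
    intro i s
    have hcompl : (D i s) ⁻¹' {0} = ((D i s) ⁻¹' {1})ᶜ := by
      ext ω
      simp only [Set.mem_preimage, Set.mem_singleton_iff, Set.mem_compl_iff]
      rcases hval i s ω with h | h <;> simp [h]
    rw [hcompl, measure_compl (hmeas i s (measurableSet_singleton 1)) (measure_ne_top P _),
      hone i s, ← one_sub_logistic,
      ENNReal.ofReal_sub _ (le_of_lt (logistic_pos _)), ENNReal.ofReal_one, measure_univ]
  -- the value patterns for Z = 1 and Z = -1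
  set f1 : Fin 2 × Fin 2 → ℝ := fun p => if p.1 = p.2 then 1 else 0 with hf1
  set f2 : Fin 2 × Fin 2 → ℝ := fun p => if p.1 = p.2 then 0 else 1 with hf2
  have hS1 : {ω | Z ω = 1} = ⋂ p : Fin 2 × Fin 2, (D p.1 p.2) ⁻¹' {f1 p} := by
    ext ω
    simp only [Set.mem_setOf_eq, Set.mem_iInter, Set.mem_preimage, Set.mem_singleton_iff,
      Prod.forall, Fin.forall_fin_two, hZ ω, hf1]
    norm_num
    rcases hval 0 0 ω with h00 | h00 <;> rcases hval 0 1 ω with h01 | h01 <;>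
      rcases hval 1 0 ω with h10 | h10 <;> rcases hval 1 1 ω with h11 | h11 <;>
      simp [h00, h01, h10, h11] <;> norm_num
  have hS2 : {ω | Z ω = -1} = ⋂ p : Fin 2 × Fin 2, (D p.1 p.2) ⁻¹' {f2 p} := by
    ext ω
    simp only [Set.mem_setOf_eq, Set.mem_iInter, Set.mem_preimage, Set.mem_singleton_iff,
      Prod.forall, Fin.forall_fin_two, hZ ω, hf2]
    norm_num
    rcases hval 0 0 ω with h00 | h00 <;> rcases hval 0 1 ω with h01 | h01 <;>
      rcases hval 1 0 ω with h10 | h10 <;> rcases hval 1 1 ω with h11 | h11 <;>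
      simp [h00, h01, h10, h11] <;> norm_num
  -- measures of the two events via independence
  have hmeasS1 : MeasurableSet {ω | Z ω = 1} := by
    rw [hS1]
    exact MeasurableSet.iInter fun p => hmeas p.1 p.2 (measurableSet_singleton _)
  have hmeasS2 : MeasurableSet {ω | Z ω = -1} := by
    rw [hS2]
    exact MeasurableSet.iInter fun p => hmeas p.1 p.2 (measurableSet_singleton _)
  set q1 : ℝ := logistic (a 0 0) * logistic (-(a 0 1)) * logistic (-(a 1 0)) * logistic (a 1 1)
    with hq1
  set q2 : ℝ := logistic (-(a 0 0)) * logistic (a 0 1) * logistic (a 1 0) * logistic (-(a 1 1))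
    with hq2
  have hq1pos : 0 < q1 :=
    mul_pos (mul_pos (mul_pos (logistic_pos _) (logistic_pos _)) (logistic_pos _)) (logistic_pos _)
  have hq2pos : 0 < q2 :=
    mul_pos (mul_pos (mul_pos (logistic_pos _) (logistic_pos _)) (logistic_pos _)) (logistic_pos _)
  have hPS1 : P {ω | Z ω = 1} = ENNReal.ofReal q1 := by
    rw [hS1, hindep.meas_iInter (fun p => ⟨{f1 p}, measurableSet_singleton _, rfl⟩)]
    rw [Fintype.prod_prod_type]
    simp only [Fin.prod_univ_two, hf1]
    norm_num
    rw [hone 0 0, hzero 0 1, hzero 1 0, hone 1 1, hq1]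
    rw [← ENNReal.ofReal_mul (le_of_lt (logistic_pos _)),
      ← ENNReal.ofReal_mul (le_of_lt (logistic_pos _)),
      ← ENNReal.ofReal_mul (mul_pos (logistic_pos _) (logistic_pos _)).le]
    ring_nf
  have hPS2 : P {ω | Z ω = -1} = ENNReal.ofReal q2 := by
    rw [hS2, hindep.meas_iInter (fun p => ⟨{f2 p}, measurableSet_singleton _, rfl⟩)]
    rw [Fintype.prod_prod_type]
    simp only [Fin.prod_univ_two, hf2]
    norm_num
    rw [hzero 0 0, hone 0 1, hone 1 0, hzero 1 1, hq2]
    rw [← ENNReal.ofReal_mul (le_of_lt (logistic_pos _)),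
      ← ENNReal.ofReal_mul (le_of_lt (logistic_pos _)),
      ← ENNReal.ofReal_mul (mul_pos (logistic_pos _) (logistic_pos _)).le]
    ring_nf
  -- the conditioning event
  have hB : {ω | Z ω = 1 ∨ Z ω = -1} = {ω | Z ω = 1} ∪ {ω | Z ω = -1} := by
    ext ω; simp [Set.mem_union]
  have hdisj : Disjoint {ω | Z ω = 1} {ω | Z ω = -1} := by
    rw [Set.disjoint_left]
    intro ω h1 h2
    simp only [Set.mem_setOf_eq] at h1 h2
    rw [h1] at h2; norm_num at h2
  have hPB : P {ω | Z ω = 1 ∨ Z ω = -1} = ENNReal.ofReal (q1 + q2) := by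
    rw [hB, measure_union hdisj hmeasS2, hPS1, hPS2,
      ENNReal.ofReal_add (le_of_lt hq1pos) (le_of_lt hq2pos)]
  have hmeasB : MeasurableSet {ω | Z ω = 1 ∨ Z ω = -1} := by
    rw [hB]; exact hmeasS1.union hmeasS2
  -- compute the conditional probability
  rw [cond_apply hmeasB P, hPB,
    Set.inter_eq_self_of_subset_right (by rw [hB]; exact Set.subset_union_left), hPS1]
  have hinner : ⟪r, β⟫ = a 0 0 - a 0 1 - a 1 0 + a 1 1 := by
    rw [hr, ha]
    simp only [inner_sub_left]
    ring
  rw [hinner, ← logistic_key (a 0 0) (a 0 1) (a 1 0) (a 1 1), ← hq1, ← hq2,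
    ENNReal.ofReal_div_of_pos (by linarith), div_eq_mul_inv, mul_comm]
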